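/- Contraction of expansion points for the convex approximation (Lemma 1). Suppose Assumptions 1 and 2 hold. Define Θ := blockdiag(Θ_G, Θ_F) + (C_cvx/C_matrix²)·I, a positive definite matrix on ℝ^{d+m}. Then there exist constants C_contr > 0 and C_excess < ∞, depending only on C_matrix, C_cvx, C_Lip, C_grad, such that the following holds. Let x* ∈ S be a critical point: there exists w* ∈ ∂F_{Kx*}(Kx*) with −Kᵀw* a subgradient of G_{x*} at x* relative to S. For any expansion points (z, v) with ‖z‖_restrict ≤ R, let x*_{z,v} ∈ S be a minimizer of x ↦ F_v(Kx) + G_z(x) over S, and let w*_{z,v} ∈ ∂F_v(K x*_{z,v}) be such that −Kᵀw*_{z,v} is a subgradient of G_z at x*_{z,v} relative to S. Then ‖(x*_{z,v} − x*, K x*_{z,v} − K x*)‖_Θ ≤ (1 − C_contr)·‖(z − x*, v − K x*)‖_Θ + C_excess·τR, and ‖(x*_{z,v} − x*, w*_{z,v} − w*)‖₂ ≤ C_Lip + C_excess·(‖(z − x*, v − K x*)‖_Θ + τR). -/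

import Mathlib

open Matrix

noncomputable section

/-- The continuous linear map `x ↦ ⟨g, x⟩` on `ℝ^n`, used to express gradients. -/
def dotCLM {n : ℕ} (g : Fin n → ℝ) : (Fin n → ℝ) →L[ℝ] ℝ :=
  LinearMap.toContinuousLinearMap
    { toFun := fun x => g ⬝ᵥ x
      map_add' := fun x y => by simp [dotProduct_add]
      map_smul' := fun c x => by simp [dotProduct_smul] }

/-- Euclidean norm `‖x‖₂`. -/
def e2 {n : Type*} [Fintype n] (x : n → ℝ) : ℝ := Real.sqrt (x ⬝ᵥ x)

/-- The norm `‖x‖_A = √(xᵀ A x)` associated to a positive semidefinite matrix `A`. -/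
def qnorm {n : Type*} [Fintype n] (A : Matrix n n ℝ) (x : n → ℝ) : ℝ :=
  Real.sqrt (x ⬝ᵥ A.mulVec x)

/-- Euclidean operator norm of a matrix. -/
def opNorm {p q : Type*} [Fintype p] [Fintype q] [DecidableEq q] (A : Matrix p q ℝ) : ℝ :=
  ‖LinearMap.toContinuousLinearMap (Matrix.toEuclideanLin A)‖

/-- `g` is a subgradient of `φ` at `x` (unrestricted). -/
def IsSubgrad {n : Type*} [Fintype n] (φ : (n → ℝ) → ℝ) (x g : n → ℝ) : Prop :=
  ∀ y, φ x + g ⬝ᵥ (y - x) ≤ φ y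

/-- `g` is a subgradient of `φ` at `x` relative to the set `S`. -/
def IsSubgradOn {n : Type*} [Fintype n] (S : Set (n → ℝ)) (φ : (n → ℝ) → ℝ) (x g : n → ℝ) :
    Prop :=
  x ∈ S ∧ ∀ y ∈ S, φ x + g ⬝ᵥ (y - x) ≤ φ y

/-- The block matrix `M = [[T⁻¹, −Kᵀ], [−K, Σ⁻¹]]` of Assumption 1, where `T = diagonal τv`
and `Σ = diagonal σv`. -/
def Mblock {d m : ℕ} (K : Matrix (Fin m) (Fin d) ℝ) (τv : Fin d → ℝ) (σv : Fin m → ℝ) :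
    Matrix (Fin d ⊕ Fin m) (Fin d ⊕ Fin m) ℝ :=
  Matrix.fromBlocks (Matrix.diagonal τv)⁻¹ (-Kᵀ) (-K) (Matrix.diagonal σv)⁻¹

/-- The matrix `Θ = blockdiag(Θ_G, Θ_F) + c·I`. -/
def thetaMat {d m : ℕ} (ΘG : Matrix (Fin d) (Fin d) ℝ) (ΘF : Matrix (Fin m) (Fin m) ℝ)
    (c : ℝ) : Matrix (Fin d ⊕ Fin m) (Fin d ⊕ Fin m) ℝ :=
  Matrix.fromBlocks ΘG 0 0 ΘF + c • 1


section AuxLemmas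

lemma dot_self_nonneg' {n : Type*} [Fintype n] (x : n → ℝ) : 0 ≤ x ⬝ᵥ x :=
  Finset.sum_nonneg fun i _ => mul_self_nonneg (x i)

lemma norm_euclid {n : Type*} [Fintype n] (x : n → ℝ) :
    ‖(WithLp.equiv 2 (n → ℝ)).symm x‖ = e2 x := by
  rw [EuclideanSpace.norm_eq]
  unfold e2 dotProduct
  congr 1
  refine Finset.sum_congr rfl fun i _ => ?_
  simp [Real.norm_eq_abs, sq_abs, sq]

lemma inner_euclid {n : Type*} [Fintype n] (x y : n → ℝ) :
    (inner ℝ ((WithLp.equiv 2 (n → ℝ)).symm x) ((WithLp.equiv 2 (n → ℝ)).symm y) : ℝ) = x ⬝ᵥ y := by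
  rw [PiLp.inner_apply]
  refine Finset.sum_congr rfl fun i _ => ?_
  simp [RCLike.inner_apply, mul_comm]

lemma e2_nonneg {n : Type*} [Fintype n] (x : n → ℝ) : 0 ≤ e2 x := Real.sqrt_nonneg _

lemma e2_sq {n : Type*} [Fintype n] (x : n → ℝ) : e2 x ^ 2 = x ⬝ᵥ x :=
  Real.sq_sqrt (dot_self_nonneg' x)

lemma e2_add_le {n : Type*} [Fintype n] (x y : n → ℝ) : e2 (x + y) ≤ e2 x + e2 y := by
  rw [← norm_euclid, ← norm_euclid, ← norm_euclid]
  exact norm_add_le _ _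

lemma e2_neg {n : Type*} [Fintype n] (x : n → ℝ) : e2 (-x) = e2 x := by
  rw [← norm_euclid, ← norm_euclid, ← norm_neg ((WithLp.equiv 2 (n → ℝ)).symm x)]
  rfl

lemma toCLM_apply {p q : Type*} [Fintype p] [Fintype q] [DecidableEq q] (A : Matrix p q ℝ)
    (x : q → ℝ) :
    (LinearMap.toContinuousLinearMap (Matrix.toEuclideanLin A)) ((WithLp.equiv 2 (q → ℝ)).symm x)
      = (WithLp.equiv 2 (p → ℝ)).symm (A.mulVec x) := by
  simp [Matrix.toEuclideanLin_apply]

lemma e2_mulVec_le {p q : Type*} [Fintype p] [Fintype q] [DecidableEq q] (A : Matrix p q ℝ)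
    (x : q → ℝ) : e2 (A.mulVec x) ≤ opNorm A * e2 x := by
  have h := (LinearMap.toContinuousLinearMap (Matrix.toEuclideanLin A)).le_opNorm
    ((WithLp.equiv 2 (q → ℝ)).symm x)
  rwa [toCLM_apply, norm_euclid, norm_euclid] at h

lemma opNorm_nonneg' {p q : Type*} [Fintype p] [Fintype q] [DecidableEq q]
    (A : Matrix p q ℝ) : 0 ≤ opNorm A := norm_nonneg _

lemma dot_le_e2 {n : Type*} [Fintype n] (x y : n → ℝ) : x ⬝ᵥ y ≤ e2 x * e2 y := by
  rw [← inner_euclid, ← norm_euclid, ← norm_euclid]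
  exact real_inner_le_norm _ _

lemma quad_le_opNorm {n : Type*} [Fintype n] [DecidableEq n] (A : Matrix n n ℝ) (x : n → ℝ) :
    x ⬝ᵥ A.mulVec x ≤ opNorm A * (x ⬝ᵥ x) := by
  calc x ⬝ᵥ A.mulVec x ≤ e2 x * e2 (A.mulVec x) := dot_le_e2 _ _
    _ ≤ e2 x * (opNorm A * e2 x) :=
        mul_le_mul_of_nonneg_left (e2_mulVec_le A x) (e2_nonneg x)
    _ = opNorm A * (e2 x * e2 x) := by ring
    _ = opNorm A * (x ⬝ᵥ x) := by rw [← sq, e2_sq]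

lemma E_mulVec_le {p q : Type*} [Fintype p] [Fintype q] [DecidableEq q] (A : Matrix p q ℝ)
    (x : q → ℝ) : (A.mulVec x) ⬝ᵥ (A.mulVec x) ≤ opNorm A ^ 2 * (x ⬝ᵥ x) := by
  have h := e2_mulVec_le A x
  have h2 := e2_nonneg (A.mulVec x)
  nlinarith [e2_sq (A.mulVec x), e2_sq x, e2_nonneg x, opNorm_nonneg' A]

lemma one_le_opNorm_mul {n : Type*} [Fintype n] [DecidableEq n] [Nonempty n]
    (A B : Matrix n n ℝ) (h : A * B = 1) : 1 ≤ opNorm A * opNorm B := by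
  set x : n → ℝ := fun _ => 1 with hx
  have hE : x ⬝ᵥ x = Fintype.card n := by
    unfold dotProduct
    simp [hx, Finset.card_univ]
  have hEpos : 0 < x ⬝ᵥ x := by rw [hE]; exact_mod_cast Fintype.card_pos
  have he2 : 0 < e2 x := Real.sqrt_pos.2 hEpos
  have h1 : e2 (A.mulVec (B.mulVec x)) = e2 x := by
    rw [Matrix.mulVec_mulVec, h, Matrix.one_mulVec]
  have h2 : e2 (A.mulVec (B.mulVec x)) ≤ opNorm A * (opNorm B * e2 x) := by
    calc e2 (A.mulVec (B.mulVec x)) ≤ opNorm A * e2 (B.mulVec x) := e2_mulVec_le _ _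
      _ ≤ opNorm A * (opNorm B * e2 x) :=
        mul_le_mul_of_nonneg_left (e2_mulVec_le _ _) (opNorm_nonneg' A)
  rw [h1] at h2
  nlinarith

lemma psd_quad_nonneg {n : Type*} [Fintype n] {A : Matrix n n ℝ} (h : A.PosSemidef)
    (x : n → ℝ) : 0 ≤ x ⬝ᵥ A.mulVec x := by
  have := h.dotProduct_mulVec_nonneg x; simpa using this

lemma sqrt_add_le' (a b : ℝ) (ha : 0 ≤ a) (hb : 0 ≤ b) :
    Real.sqrt (a + b) ≤ Real.sqrt a + Real.sqrt b := by
  nlinarith [Real.sq_sqrt ha, Real.sq_sqrt hb, Real.sqrt_nonneg a, Real.sqrt_nonneg b,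
    Real.sqrt_nonneg (a+b), Real.sq_sqrt (by linarith : (0:ℝ) ≤ a + b)]

lemma dotCLM_apply {n : ℕ} (g x : Fin n → ℝ) : dotCLM g x = g ⬝ᵥ x := rfl

lemma dotCLM_sub {n : ℕ} (g h : Fin n → ℝ) : dotCLM g - dotCLM h = dotCLM (g - h) := by
  ext x
  simp [dotCLM_apply, sub_dotProduct]

lemma subgrad_transfer {n : ℕ} {S : Set (Fin n → ℝ)} (hS : Convex ℝ S)
    {φ₁ φ₂ : (Fin n → ℝ) → ℝ} (hφ₂ : ConvexOn ℝ S φ₂)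
    {ψg w a : Fin n → ℝ}
    (hψ : HasFDerivAt (fun y => φ₂ y - φ₁ y) (dotCLM ψg) w)
    (hw : w ∈ S) (ha : ∀ y ∈ S, φ₁ w + a ⬝ᵥ (y - w) ≤ φ₁ y) :
    ∀ y ∈ S, φ₂ w + (a + ψg) ⬝ᵥ (y - w) ≤ φ₂ y := by
  intro y hy
  set u := y - w with hu
  set ψ := fun y => φ₂ y - φ₁ y with hψdef
  have hline : HasDerivAt (fun t : ℝ => ψ (w + t • u)) (ψg ⬝ᵥ u) 0 := by
    have h1 : HasDerivAt (fun t : ℝ => w + t • u) u 0 := by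
      simpa using ((hasDerivAt_id (0 : ℝ)).smul_const u).const_add w
    have h2 : HasFDerivAt ψ (dotCLM ψg) ((fun t : ℝ => w + t • u) 0) := by
      simpa using hψ
    have := h2.comp_hasDerivAt 0 h1
    rw [dotCLM_apply] at this
    exact this
  have hkey : ∀ t ∈ Set.Ioo (0:ℝ) 1,
      slope (fun t : ℝ => ψ (w + t • u)) 0 t ≤ φ₂ y - φ₂ w - a ⬝ᵥ u := by
    intro t ht
    obtain ⟨ht0, ht1⟩ := ht
    have hmem : w + t • u ∈ S := by
      have := hS hw hy (by linarith : (0:ℝ) ≤ 1 - t) (le_of_lt ht0) (by ring)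
      have heq : (1 - t) • w + t • y = w + t • u := by
        rw [hu]; module
      rwa [heq] at this
    have h1 : φ₁ w + t * (a ⬝ᵥ u) ≤ φ₁ (w + t • u) := by
      have := ha (w + t • u) hmem
      have heq : (w + t • u) - w = t • u := by abel
      rwa [heq, dotProduct_smul, smul_eq_mul] at this
    have h2 : φ₂ (w + t • u) ≤ (1 - t) * φ₂ w + t * φ₂ y := by
      have := hφ₂.2 hw hy (by linarith : (0:ℝ) ≤ 1 - t) (le_of_lt ht0) (by ring)
      have heq : (1 - t) • w + t • y = w + t • u := by rw [hu]; module
      rw [heq] at this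
      simpa [smul_eq_mul] using this
    have hψ0 : ψ (w + (0:ℝ) • u) = φ₂ w - φ₁ w := by simp [hψdef]
    rw [slope_def_field]
    have hnum : ψ (w + t • u) - ψ (w + (0:ℝ) • u) ≤ t * (φ₂ y - φ₂ w - a ⬝ᵥ u) := by
      rw [hψ0]
      have : ψ (w + t • u) = φ₂ (w + t • u) - φ₁ (w + t • u) := rfl
      rw [this]
      nlinarith [h1, h2]
    have : (ψ (w + t • u) - ψ (w + (0:ℝ) • u)) / t ≤ φ₂ y - φ₂ w - a ⬝ᵥ u := by
      rw [div_le_iff₀ ht0]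
      linarith [hnum]
    simpa [sub_zero] using this
  have hlim : ψg ⬝ᵥ u ≤ φ₂ y - φ₂ w - a ⬝ᵥ u := by
    have htend : Filter.Tendsto (slope (fun t : ℝ => ψ (w + t • u)) 0)
        (nhdsWithin 0 (Set.Ioi 0)) (nhds (ψg ⬝ᵥ u)) := by
      have := hasDerivAt_iff_tendsto_slope.1 hline
      exact this.mono_left (nhdsWithin_mono 0 (fun t ht => ne_of_gt ht))
    refine le_of_tendsto htend ?_
    filter_upwards [Ioo_mem_nhdsGT_of_mem (Set.mem_Ico.2 ⟨le_refl 0, zero_lt_one⟩)] with t ht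
    exact hkey t ht
  have h3 : (a + ψg) ⬝ᵥ u = a ⬝ᵥ u + ψg ⬝ᵥ u := add_dotProduct _ _ _
  rw [h3]
  linarith

lemma thetaMat_quad {d m : ℕ} (ΘG : Matrix (Fin d) (Fin d) ℝ) (ΘF : Matrix (Fin m) (Fin m) ℝ)
    (c : ℝ) (u : Fin d → ℝ) (v : Fin m → ℝ) :
    Sum.elim u v ⬝ᵥ (thetaMat ΘG ΘF c).mulVec (Sum.elim u v)
      = u ⬝ᵥ ΘG.mulVec u + v ⬝ᵥ ΘF.mulVec v + c * (u ⬝ᵥ u + v ⬝ᵥ v) := by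
  unfold thetaMat
  rw [Matrix.add_mulVec, Matrix.smul_mulVec, Matrix.one_mulVec, dotProduct_add,
    Matrix.fromBlocks_mulVec]
  rw [dotProduct_smul]
  have h1 : Sum.elim u v ∘ Sum.inl = u := rfl
  have h2 : Sum.elim u v ∘ Sum.inr = v := rfl
  rw [h1, h2, Matrix.zero_mulVec, Matrix.zero_mulVec, add_zero, zero_add,
    sumElim_dotProduct_sumElim, sumElim_dotProduct_sumElim]
  simp [smul_eq_mul]

lemma Kbound {d m : ℕ} (K : Matrix (Fin m) (Fin d) ℝ) (τv : Fin d → ℝ) (σv : Fin m → ℝ)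
    (x : Fin d → ℝ) :
    (K.mulVec x) ⬝ᵥ (K.mulVec x) ≤ opNorm (Mblock K τv σv) ^ 2 * (x ⬝ᵥ x) := by
  have h := E_mulVec_le (Mblock K τv σv) (Sum.elim x 0)
  have hmv : (Mblock K τv σv).mulVec (Sum.elim x 0)
      = Sum.elim ((Matrix.diagonal τv)⁻¹.mulVec x) ((-K).mulVec x) := by
    unfold Mblock
    rw [Matrix.fromBlocks_mulVec]
    have h1 : Sum.elim x (0 : Fin m → ℝ) ∘ Sum.inl = x := rfl
    have h2 : Sum.elim x (0 : Fin m → ℝ) ∘ Sum.inr = 0 := rfl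
    rw [h1, h2, Matrix.mulVec_zero, Matrix.mulVec_zero, add_zero, add_zero]
  rw [hmv, sumElim_dotProduct_sumElim, sumElim_dotProduct_sumElim] at h
  have hz : (0 : Fin m → ℝ) ⬝ᵥ (0 : Fin m → ℝ) = 0 := by simp
  rw [hz, add_zero] at h
  have hneg : ((-K).mulVec x) ⬝ᵥ ((-K).mulVec x) = (K.mulVec x) ⬝ᵥ (K.mulVec x) := by
    rw [Matrix.neg_mulVec]
    simp [dotProduct_neg, neg_dotProduct]
  rw [hneg] at h
  have := dot_self_nonneg' ((Matrix.diagonal τv)⁻¹.mulVec x)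
  linarith

lemma ball_convex {d : ℕ} (nr : Seminorm ℝ (Fin d → ℝ)) (R : ℝ) :
    Convex ℝ {x | nr x ≤ R} := by
  have h := nr.convex_closedBall 0 R
  have heq : nr.closedBall 0 R = {x | nr x ≤ R} := by
    ext y; simp [Seminorm.mem_closedBall_zero]
  rwa [heq] at h

lemma quad_neg {n : Type*} [Fintype n] (A : Matrix n n ℝ) (x : n → ℝ) :
    (-x) ⬝ᵥ A.mulVec (-x) = x ⬝ᵥ A.mulVec x := by
  rw [Matrix.mulVec_neg]
  simp [dotProduct_neg, neg_dotProduct]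

lemma cross_dot {d m : ℕ} (K : Matrix (Fin m) (Fin d) ℝ) (x : Fin d → ℝ) (q : Fin m → ℝ) :
    (K.mulVec x) ⬝ᵥ q = x ⬝ᵥ Kᵀ.mulVec q := by
  rw [Matrix.dotProduct_mulVec, Matrix.vecMul_transpose]

end AuxLemmas

set_option maxHeartbeats 1600000 in
/-- **Lemma 1 of MOCCA (Barber–Sidky)**: contraction of expansion points for the convex
approximation. -/
theorem mocca_lemma1 (Cmat Ccvx CLip Cgrad : ℝ) (hCcvx : 0 < Ccvx) :
    ∃ Ccontr : ℝ, 0 < Ccontr ∧ ∃ Cexcess : ℝ,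
      ∀ (d m : ℕ) (K : Matrix (Fin m) (Fin d) ℝ)
        (F : (Fin m → ℝ) → ℝ) (G : (Fin d → ℝ) → ℝ)
        (Fv : (Fin m → ℝ) → (Fin m → ℝ) → ℝ) (Gz : (Fin d → ℝ) → (Fin d → ℝ) → ℝ)
        (gradF : (Fin m → ℝ) → (Fin m → ℝ) → Fin m → ℝ)
        (gradG : (Fin d → ℝ) → (Fin d → ℝ) → Fin d → ℝ)
        (nr : Seminorm ℝ (Fin d → ℝ)) (R τ : ℝ)
        (σv : Fin m → ℝ) (τv : Fin d → ℝ)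
        (ΛF ΘF : Matrix (Fin m) (Fin m) ℝ) (ΛG ΘG : Matrix (Fin d) (Fin d) ℝ)
        (xstar z xzv : Fin d → ℝ) (wstar v wzv : Fin m → ℝ),
        0 < R → 0 ≤ τ →
        -- standing conditions (4) on the local convex approximations
        (∀ v', ConvexOn ℝ Set.univ (Fv v')) →
        (∀ v', Continuous (Fv v')) →
        (∀ z', ConvexOn ℝ {x | nr x ≤ R} (Gz z')) →
        (∀ v' w', HasFDerivAt (fun u => F u - Fv v' u) (dotCLM (gradF v' w')) w') →
        (∀ z' x', HasFDerivAt (fun u => G u - Gz z' u) (dotCLM (gradG z' x')) x') →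
        (∀ v', gradF v' v' = 0) →
        (∀ z', gradG z' z' = 0) →
        -- Assumption 1
        (∀ i, 0 < σv i) → (∀ i, 0 < τv i) →
        (Mblock K τv σv).PosDef →
        -- Assumption 2
        ΛF.PosSemidef → ΘF.PosSemidef → ΛG.PosSemidef → ΘG.PosSemidef →
        -- (a) strong convexity of F_v
        (∀ v' w u a a', IsSubgrad (Fv v') (w + u) a → IsSubgrad (Fv v') w a' →
          u ⬝ᵥ ΛF.mulVec u ≤ u ⬝ᵥ (a - a')) →
        -- (b) smoothness of F − F_v
        (∀ v' w u, |u ⬝ᵥ gradF v' (v' + w)| ≤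
          (1 / 2) * (u ⬝ᵥ ΘF.mulVec u + w ⬝ᵥ ΘF.mulVec w)) →
        -- (c) gradient condition on F_v
        (∀ v' w w' a a', IsSubgrad (Fv v') w a → IsSubgrad (Fv v') w' a' →
          e2 (a - a') ≤ CLip + Cgrad * e2 (w - w')) →
        -- (d) restricted strong convexity of G_z
        (∀ z' x y g g', IsSubgradOn {x | nr x ≤ R} (Gz z') (x + y) g →
          IsSubgradOn {x | nr x ≤ R} (Gz z') x g' →
          y ⬝ᵥ ΛG.mulVec y - τ ^ 2 * (nr y) ^ 2 ≤ y ⬝ᵥ (g - g')) →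
        -- (e) restricted smoothness of G − G_z
        (∀ z' x y, |y ⬝ᵥ gradG z' (z' + x)| ≤
          (1 / 2) * (x ⬝ᵥ ΘG.mulVec x + y ⬝ᵥ ΘG.mulVec y)
            + (τ ^ 2 / 2) * ((nr x) ^ 2 + (nr y) ^ 2)) →
        -- (f) total convexity
        (∀ x, x ⬝ᵥ (Kᵀ * ΘF * K + ΘG).mulVec x + Ccvx * (x ⬝ᵥ x) - τ ^ 2 * (nr x) ^ 2
          ≤ x ⬝ᵥ (Kᵀ * ΛF * K + ΛG).mulVec x) →
        -- C_matrix is the max of the operator norms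
        Cmat = max (opNorm ΛF) (max (opNorm ΘF) (max (opNorm ΛG) (max (opNorm ΘG)
          (max (opNorm (Mblock K τv σv)) (opNorm (Mblock K τv σv)⁻¹))))) →
        -- x* ∈ S is a critical point with dual certificate w*
        nr xstar ≤ R →
        IsSubgrad (Fv (K.mulVec xstar)) (K.mulVec xstar) wstar →
        IsSubgradOn {x | nr x ≤ R} (Gz xstar) xstar (-(Kᵀ.mulVec wstar)) →
        -- expansion points (z, v) with ‖z‖_restrict ≤ R, and the minimizer x*_{z,v} with w*_{z,v}
        nr z ≤ R →
        nr xzv ≤ R →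
        (∀ y, nr y ≤ R → Fv v (K.mulVec xzv) + Gz z xzv ≤ Fv v (K.mulVec y) + Gz z y) →
        IsSubgrad (Fv v) (K.mulVec xzv) wzv →
        IsSubgradOn {x | nr x ≤ R} (Gz z) xzv (-(Kᵀ.mulVec wzv)) →
        -- conclusions
        qnorm (thetaMat ΘG ΘF (Ccvx / Cmat ^ 2))
            (Sum.elim (xzv - xstar) (K.mulVec xzv - K.mulVec xstar))
          ≤ (1 - Ccontr) * qnorm (thetaMat ΘG ΘF (Ccvx / Cmat ^ 2))
              (Sum.elim (z - xstar) (v - K.mulVec xstar))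
            + Cexcess * (τ * R)
        ∧ e2 (Sum.elim (xzv - xstar) (wzv - wstar))
          ≤ CLip + Cexcess * (qnorm (thetaMat ΘG ΘF (Ccvx / Cmat ^ 2))
              (Sum.elim (z - xstar) (v - K.mulVec xstar)) + τ * R) := by
  classical
  set m1 := max Cmat 1 with hm1
  set cc := Ccvx / m1 ^ 2 with hcc
  have hm1pos : (0:ℝ) < m1 := lt_of_lt_of_le zero_lt_one (le_max_right _ _)
  have hm1ge1 : (1:ℝ) ≤ m1 := le_max_right _ _
  have hccpos : 0 < cc := div_pos hCcvx (by positivity)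
  set ρ := m1 / (m1 + cc) with hρ
  have hρpos : 0 < ρ := div_pos hm1pos (by linarith)
  have hρlt : ρ < 1 := by
    rw [hρ, div_lt_one (by linarith)]; linarith
  have hsqρ : Real.sqrt ρ < 1 := by
    have := Real.sqrt_lt_sqrt (le_of_lt hρpos) hρlt
    simpa using this
  have hsqρ0 : 0 ≤ Real.sqrt ρ := Real.sqrt_nonneg _
  set Cex := 5 + 5 * (1 + |Cgrad| * m1) / Real.sqrt (2 * Ccvx) + m1 / Real.sqrt cc with hCex
  have hα0 : 0 ≤ 5 * (1 + |Cgrad| * m1) / Real.sqrt (2 * Ccvx) := by positivity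
  have hα0' : 0 ≤ (1 + |Cgrad| * m1) / Real.sqrt (2 * Ccvx) := by positivity
  have hβ0 : 0 ≤ m1 / Real.sqrt cc := by positivity
  have hCex5 : 5 ≤ Cex := by rw [hCex]; linarith
  refine ⟨1 - Real.sqrt ρ, by linarith, Cex, ?_⟩
  intro d m K F G Fv Gz gradF gradG nr R τ σv τv ΛF ΘF ΛG ΘG xstar z xzv wstar v wzv
    hR hτ hFvconv hFvcont hGzconv hFdiff hGdiff hgradF0 hgradG0 hσ hτvpos hMpos
    hΛF hΘF hΛG hΘG hAs hBs hCs hDs hEs hfs hCmatdef hxstarS hwstar hwstarG hzS hxzvS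
    hmin hwzv hwzvG
  have hτR : 0 ≤ τ * R := mul_nonneg hτ (le_of_lt hR)
  -- 0 ≤ CLip
  have hCLip0 : 0 ≤ CLip := by
    have h := hCs v (K.mulVec xzv) (K.mulVec xzv) wzv wzv hwzv hwzv
    have hz1 : e2 (wzv - wzv) = 0 := by
      simp [e2, sub_self, zero_dotProduct]
    have hz2 : e2 (K.mulVec xzv - K.mulVec xzv) = 0 := by
      simp [e2, sub_self, zero_dotProduct]
    rw [hz1, hz2] at h
    linarith only [h]
  by_cases hne : Nonempty (Fin d ⊕ Fin m)
  · -- main case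
    have hCmatM : opNorm (Mblock K τv σv) ≤ Cmat := by
      rw [hCmatdef]; simp [le_max_iff, le_refl]
    have hCmatMinv : opNorm (Mblock K τv σv)⁻¹ ≤ Cmat := by
      rw [hCmatdef]; simp [le_max_iff, le_refl]
    have hCmatΘF : opNorm ΘF ≤ Cmat := by
      rw [hCmatdef]; simp [le_max_iff, le_refl]
    have hCmatΘG : opNorm ΘG ≤ Cmat := by
      rw [hCmatdef]; simp [le_max_iff, le_refl]
    have hdet : IsUnit (Mblock K τv σv).det := hMpos.det_pos.ne'.isUnit
    have hMinv : (Mblock K τv σv) * (Mblock K τv σv)⁻¹ = 1 :=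
      Matrix.mul_nonsing_inv _ hdet
    have h1le := one_le_opNorm_mul _ _ hMinv
    have hCmat1 : (1:ℝ) ≤ Cmat := by
      nlinarith only [h1le, hCmatM, hCmatMinv, opNorm_nonneg' (Mblock K τv σv), opNorm_nonneg' (Mblock K τv σv)⁻¹]
    have hm1C : m1 = Cmat := max_eq_left hCmat1
    -- abbreviations
    set Δx := xzv - xstar with hΔx
    have hKdx : K.mulVec xzv - K.mulVec xstar = K.mulVec Δx := by
      rw [hΔx, Matrix.mulVec_sub]
    set gF := gradF v (K.mulVec xstar) with hgF
    set gG := gradG z xstar with hgG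
    -- subgradient transfer for F
    have hFder : HasFDerivAt (fun y => Fv v y - Fv (K.mulVec xstar) y) (dotCLM (-gF))
        (K.mulVec xstar) := by
      have hg1 := hFdiff (K.mulVec xstar) (K.mulVec xstar)
      have hg2 := hFdiff v (K.mulVec xstar)
      have h := hg1.sub hg2
      have hfun : (fun u => (F u - Fv (K.mulVec xstar) u) - (F u - Fv v u))
          = fun y => Fv v y - Fv (K.mulVec xstar) y := by funext u; ring
      rw [show ((fun u => F u - Fv (K.mulVec xstar) u) - fun u => F u - Fv v u) = (fun u => (F u - Fv (K.mulVec xstar) u) - (F u - Fv v u)) from rfl, hfun, dotCLM_sub, hgradF0 (K.mulVec xstar)] at h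
      rw [← hgF] at h
      rw [show (0:Fin m → ℝ) - gF = -gF by abel] at h
      exact h
    have hFsub : IsSubgrad (Fv v) (K.mulVec xstar) (wstar - gF) := by
      have h := subgrad_transfer (convex_univ) (hFvconv v) hFder (Set.mem_univ _)
        (fun y _ => hwstar y)
      intro y
      have := h y (Set.mem_univ y)
      rwa [show wstar + -gF = wstar - gF by abel] at this
    -- subgradient transfer for G
    have hGder : HasFDerivAt (fun y => Gz z y - Gz xstar y) (dotCLM (-gG)) xstar := by
      have hg1 := hGdiff xstar xstar
      have hg2 := hGdiff z xstar
      have h := hg1.sub hg2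
      have hfun : (fun u => (G u - Gz xstar u) - (G u - Gz z u))
          = fun y => Gz z y - Gz xstar y := by funext u; ring
      rw [show ((fun u => G u - Gz xstar u) - fun u => G u - Gz z u) = (fun u => (G u - Gz xstar u) - (G u - Gz z u)) from rfl, hfun, dotCLM_sub, hgradG0 xstar] at h
      rw [← hgG] at h
      rw [show (0:Fin d → ℝ) - gG = -gG by abel] at h
      exact h
    have hGsub : IsSubgradOn {x | nr x ≤ R} (Gz z) xstar (-(Kᵀ.mulVec wstar) - gG) := by
      have h := subgrad_transfer (ball_convex nr R) (hGzconv z) hGder hxstarS hwstarG.2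
      refine ⟨hxstarS, fun y hy => ?_⟩
      have := h y hy
      rwa [show -(Kᵀ.mulVec wstar) + -gG = -(Kᵀ.mulVec wstar) - gG by abel] at this
    -- monotonicity inequalities
    have ha' : (K.mulVec Δx) ⬝ᵥ ΛF.mulVec (K.mulVec Δx)
        ≤ (K.mulVec Δx) ⬝ᵥ (wzv - (wstar - gF)) := by
      refine hAs v (K.mulVec xstar) (K.mulVec Δx) wzv (wstar - gF) ?_ hFsub
      have h : K.mulVec xstar + K.mulVec Δx = K.mulVec xzv := by rw [← hKdx]; abel
      rw [h]; exact hwzv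
    have hd' : Δx ⬝ᵥ ΛG.mulVec Δx - τ ^ 2 * (nr Δx) ^ 2
        ≤ Δx ⬝ᵥ (-(Kᵀ.mulVec wzv) - (-(Kᵀ.mulVec wstar) - gG)) := by
      refine hDs z xstar Δx (-(Kᵀ.mulVec wzv)) (-(Kᵀ.mulVec wstar) - gG) ?_ hGsub
      have h : xstar + Δx = xzv := by rw [hΔx]; abel
      rw [h]; exact hwzvG
    -- cancellation of the dual variables
    have hsum : (K.mulVec Δx) ⬝ᵥ (wzv - (wstar - gF))
        + Δx ⬝ᵥ (-(Kᵀ.mulVec wzv) - (-(Kᵀ.mulVec wstar) - gG))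
        = (K.mulVec Δx) ⬝ᵥ gF + Δx ⬝ᵥ gG := by
      rw [cross_dot, cross_dot, ← dotProduct_add, ← dotProduct_add]
      congr 1
      rw [Matrix.mulVec_sub, Matrix.mulVec_sub]
      abel
    -- smoothness bounds
    have hvw : v + (K.mulVec xstar - v) = K.mulVec xstar := by abel
    have hzx : z + (xstar - z) = xstar := by abel
    have hb' : |(K.mulVec Δx) ⬝ᵥ gF| ≤ 1 / 2 * ((K.mulVec Δx) ⬝ᵥ ΘF.mulVec (K.mulVec Δx)
        + (K.mulVec xstar - v) ⬝ᵥ ΘF.mulVec (K.mulVec xstar - v)) := by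
      have h := hBs v (K.mulVec xstar - v) (K.mulVec Δx)
      rwa [hvw, ← hgF] at h
    have he' : |Δx ⬝ᵥ gG| ≤ 1 / 2 * ((xstar - z) ⬝ᵥ ΘG.mulVec (xstar - z)
        + Δx ⬝ᵥ ΘG.mulVec Δx) + τ ^ 2 / 2 * ((nr (xstar - z)) ^ 2 + (nr Δx) ^ 2) := by
      have h := hEs z (xstar - z) Δx
      rwa [hzx, ← hgG] at h
    -- total convexity split
    have hsplit : ∀ (P : Matrix (Fin m) (Fin m) ℝ) (Q : Matrix (Fin d) (Fin d) ℝ),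
        Δx ⬝ᵥ (Kᵀ * P * K + Q).mulVec Δx
          = (K.mulVec Δx) ⬝ᵥ P.mulVec (K.mulVec Δx) + Δx ⬝ᵥ Q.mulVec Δx := by
      intro P Q
      rw [Matrix.add_mulVec, dotProduct_add]
      congr 1
      rw [← Matrix.mulVec_mulVec, ← Matrix.mulVec_mulVec, ← cross_dot]
    have hf' := hfs Δx
    rw [hsplit ΘF ΘG, hsplit ΛF ΛG] at hf'
    -- seminorm bounds
    have hnr1 : nr Δx ≤ 2 * R := by
      calc nr Δx ≤ nr xzv + nr xstar := map_sub_le_add nr xzv xstar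
        _ ≤ 2 * R := by linarith only [hxzvS, hxstarS]
    have hnr2 : nr (xstar - z) ≤ 2 * R := by
      calc nr (xstar - z) ≤ nr xstar + nr z := map_sub_le_add nr xstar z
        _ ≤ 2 * R := by linarith only [hxstarS, hzS]
    have hnn1 : τ ^ 2 * (nr Δx) ^ 2 ≤ 4 * (τ * R) ^ 2 := by
      have h1 : (nr Δx) ^ 2 ≤ (2 * R) ^ 2 := pow_le_pow_left₀ (apply_nonneg nr Δx) hnr1 2
      have h2 := mul_le_mul_of_nonneg_left h1 (sq_nonneg τ)
      have h3 : τ ^ 2 * (2 * R) ^ 2 = 4 * (τ * R) ^ 2 := by ring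
      linarith only [h2, h3]
    have hnn2 : τ ^ 2 * (nr (xstar - z)) ^ 2 ≤ 4 * (τ * R) ^ 2 := by
      have h1 : (nr (xstar - z)) ^ 2 ≤ (2 * R) ^ 2 :=
        pow_le_pow_left₀ (apply_nonneg nr _) hnr2 2
      have h2 := mul_le_mul_of_nonneg_left h1 (sq_nonneg τ)
      have h3 : τ ^ 2 * (2 * R) ^ 2 = 4 * (τ * R) ^ 2 := by ring
      linarith only [h2, h3]
    -- key inequality
    have hmono := add_le_add ha' hd'
    rw [hsum] at hmono
    have habs1 : (K.mulVec Δx) ⬝ᵥ gF ≤ 1 / 2 * ((K.mulVec Δx) ⬝ᵥ ΘF.mulVec (K.mulVec Δx)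
        + (K.mulVec xstar - v) ⬝ᵥ ΘF.mulVec (K.mulVec xstar - v)) :=
      le_trans (le_abs_self _) hb'
    have habs2 : Δx ⬝ᵥ gG ≤ 1 / 2 * ((xstar - z) ⬝ᵥ ΘG.mulVec (xstar - z)
        + Δx ⬝ᵥ ΘG.mulVec Δx) + τ ^ 2 / 2 * ((nr (xstar - z)) ^ 2 + (nr Δx) ^ 2) :=
      le_trans (le_abs_self _) he'
    have hnegF : (K.mulVec xstar - v) ⬝ᵥ ΘF.mulVec (K.mulVec xstar - v)
        = (v - K.mulVec xstar) ⬝ᵥ ΘF.mulVec (v - K.mulVec xstar) := by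
      rw [show K.mulVec xstar - v = -(v - K.mulVec xstar) by abel, quad_neg]
    have hnegG : (xstar - z) ⬝ᵥ ΘG.mulVec (xstar - z)
        = (z - xstar) ⬝ᵥ ΘG.mulVec (z - xstar) := by
      rw [show xstar - z = -(z - xstar) by abel, quad_neg]
    have hKEY : (K.mulVec Δx) ⬝ᵥ ΘF.mulVec (K.mulVec Δx) + Δx ⬝ᵥ ΘG.mulVec Δx
        + 2 * Ccvx * (Δx ⬝ᵥ Δx)
        ≤ (v - K.mulVec xstar) ⬝ᵥ ΘF.mulVec (v - K.mulVec xstar)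
          + (z - xstar) ⬝ᵥ ΘG.mulVec (z - xstar) + 24 * (τ * R) ^ 2 := by
      rw [← hnegF, ← hnegG]
      linarith only [hmono, habs1, habs2, hf', hnn1, hnn2]
    -- quadratic norms
    have hCmatpos : (0:ℝ) < Cmat := lt_of_lt_of_le one_pos hCmat1
    have hcn : Ccvx / Cmat ^ 2 = cc := by rw [hcc, hm1C]
    have hQL : qnorm (thetaMat ΘG ΘF (Ccvx / Cmat ^ 2))
        (Sum.elim Δx (K.mulVec xzv - K.mulVec xstar))
        = Real.sqrt (Δx ⬝ᵥ ΘG.mulVec Δx + (K.mulVec Δx) ⬝ᵥ ΘF.mulVec (K.mulVec Δx)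
          + cc * (Δx ⬝ᵥ Δx + (K.mulVec Δx) ⬝ᵥ (K.mulVec Δx))) := by
      rw [qnorm, hKdx, hcn, thetaMat_quad]
    have hQR : qnorm (thetaMat ΘG ΘF (Ccvx / Cmat ^ 2))
        (Sum.elim (z - xstar) (v - K.mulVec xstar))
        = Real.sqrt ((z - xstar) ⬝ᵥ ΘG.mulVec (z - xstar)
          + (v - K.mulVec xstar) ⬝ᵥ ΘF.mulVec (v - K.mulVec xstar)
          + cc * ((z - xstar) ⬝ᵥ (z - xstar) + (v - K.mulVec xstar) ⬝ᵥ (v - K.mulVec xstar))) := by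
      rw [qnorm, hcn, thetaMat_quad]
    set QQ := (z - xstar) ⬝ᵥ ΘG.mulVec (z - xstar)
      + (v - K.mulVec xstar) ⬝ᵥ ΘF.mulVec (v - K.mulVec xstar)
      + cc * ((z - xstar) ⬝ᵥ (z - xstar) + (v - K.mulVec xstar) ⬝ᵥ (v - K.mulVec xstar))
      with hQQ
    -- nonnegativity facts
    have hpsdF2 := psd_quad_nonneg hΘF (v - K.mulVec xstar)
    have hpsdG1 := psd_quad_nonneg hΘG (z - xstar)
    have hpsdFv := psd_quad_nonneg hΘF (K.mulVec Δx)
    have hpsdGx := psd_quad_nonneg hΘG Δx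
    have hE1 := dot_self_nonneg' (z - xstar)
    have hE2 := dot_self_nonneg' (v - K.mulVec xstar)
    have hEx := dot_self_nonneg' Δx
    have hEv := dot_self_nonneg' (K.mulVec Δx)
    have hQQ0 : 0 ≤ QQ := by
      rw [hQQ]
      have h := mul_nonneg hccpos.le (add_nonneg hE1 hE2)
      linarith only [h, hpsdF2, hpsdG1]
    have hEKb : (K.mulVec Δx) ⬝ᵥ (K.mulVec Δx) ≤ Cmat ^ 2 * (Δx ⬝ᵥ Δx) := by
      have h := Kbound K τv σv Δx
      have h2 : opNorm (Mblock K τv σv) ^ 2 ≤ Cmat ^ 2 :=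
        pow_le_pow_left₀ (opNorm_nonneg' _) hCmatM 2
      have h3 := mul_le_mul_of_nonneg_right h2 hEx
      linarith only [h, h3]
    have hC2 : (1:ℝ) ≤ Cmat ^ 2 := by
      have h := pow_le_pow_left₀ zero_le_one hCmat1 2
      simpa using h
    have hccT : cc * (Δx ⬝ᵥ Δx + (K.mulVec Δx) ⬝ᵥ (K.mulVec Δx))
        ≤ 2 * Ccvx * (Δx ⬝ᵥ Δx) := by
      rw [hcc, hm1C, div_mul_eq_mul_div, div_le_iff₀ (by positivity)]
      nlinarith only [mul_le_mul_of_nonneg_left hEKb hCcvx.le,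
        mul_le_mul_of_nonneg_right hC2 (mul_nonneg hCcvx.le hEx)]
    have hBle : (v - K.mulVec xstar) ⬝ᵥ ΘF.mulVec (v - K.mulVec xstar)
        + (z - xstar) ⬝ᵥ ΘG.mulVec (z - xstar)
        ≤ Cmat * ((z - xstar) ⬝ᵥ (z - xstar) + (v - K.mulVec xstar) ⬝ᵥ (v - K.mulVec xstar)) := by
      have h1 := quad_le_opNorm ΘF (v - K.mulVec xstar)
      have h2 := quad_le_opNorm ΘG (z - xstar)
      nlinarith only [h1, h2, mul_le_mul_of_nonneg_right hCmatΘF hE2,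
        mul_le_mul_of_nonneg_right hCmatΘG hE1]
    have hB2 : (v - K.mulVec xstar) ⬝ᵥ ΘF.mulVec (v - K.mulVec xstar)
        + (z - xstar) ⬝ᵥ ΘG.mulVec (z - xstar) ≤ ρ * QQ := by
      rw [hρ, hm1C, div_mul_eq_mul_div, le_div_iff₀ (by linarith only [hCmatpos, hccpos]), hQQ]
      nlinarith only [hBle, mul_le_mul_of_nonneg_left hBle hccpos.le]
    have hQLle : Δx ⬝ᵥ ΘG.mulVec Δx + (K.mulVec Δx) ⬝ᵥ ΘF.mulVec (K.mulVec Δx)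
        + cc * (Δx ⬝ᵥ Δx + (K.mulVec Δx) ⬝ᵥ (K.mulVec Δx))
        ≤ ρ * QQ + 24 * (τ * R) ^ 2 := by
      linarith only [hKEY, hccT, hB2]
    have hsqrt24 : Real.sqrt (24 * (τ * R) ^ 2) ≤ 5 * (τ * R) := by
      have ha : (24:ℝ) * (τ * R) ^ 2 ≤ (5 * (τ * R)) ^ 2 := by nlinarith only [sq_nonneg (τ * R)]
      have hb := Real.sqrt_le_sqrt ha
      rwa [Real.sqrt_sq (by linarith only [hτR])] at hb
    have hs1 : Real.sqrt (Δx ⬝ᵥ ΘG.mulVec Δx + (K.mulVec Δx) ⬝ᵥ ΘF.mulVec (K.mulVec Δx)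
        + cc * (Δx ⬝ᵥ Δx + (K.mulVec Δx) ⬝ᵥ (K.mulVec Δx)))
        ≤ Real.sqrt (ρ * QQ + 24 * (τ * R) ^ 2) := Real.sqrt_le_sqrt hQLle
    have hs2 : Real.sqrt (ρ * QQ + 24 * (τ * R) ^ 2)
        ≤ Real.sqrt ρ * Real.sqrt QQ + 5 * (τ * R) := by
      have h := sqrt_add_le' (ρ * QQ) (24 * (τ * R) ^ 2)
        (mul_nonneg hρpos.le hQQ0) (by positivity)
      have h1 : Real.sqrt (ρ * QQ) = Real.sqrt ρ * Real.sqrt QQ :=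
        Real.sqrt_mul hρpos.le _
      linarith only [h, h1, hsqrt24]
    have hq0 : 0 ≤ Real.sqrt QQ := Real.sqrt_nonneg _
    constructor
    · rw [hQL, hQR]
      have h5 : 5 * (τ * R) ≤ Cex * (τ * R) := mul_le_mul_of_nonneg_right hCex5 hτR
      have : (1 - (1 - Real.sqrt ρ)) = Real.sqrt ρ := by ring
      rw [this]
      linarith only [hs1, hs2, h5]
    · -- second conclusion
      have hc' := hCs v (K.mulVec xzv) (K.mulVec xstar) wzv (wstar - gF) hwzv hFsub
      rw [hKdx] at hc'
      have hKe2 : e2 (K.mulVec Δx) ≤ Cmat * e2 Δx := by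
        rw [e2, e2]
        calc Real.sqrt ((K.mulVec Δx) ⬝ᵥ (K.mulVec Δx))
            ≤ Real.sqrt (Cmat ^ 2 * (Δx ⬝ᵥ Δx)) := Real.sqrt_le_sqrt hEKb
          _ = Cmat * Real.sqrt (Δx ⬝ᵥ Δx) := by
              rw [Real.sqrt_mul (by positivity) _, Real.sqrt_sq hCmatpos.le]
      have hgFE : gF ⬝ᵥ gF ≤ Cmat ^ 2 * ((v - K.mulVec xstar) ⬝ᵥ (v - K.mulVec xstar)) := by
        have hfb := hBs v (K.mulVec xstar - v) ((1 / Cmat) • gF)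
        rw [hvw, ← hgF] at hfb
        have h1 : ((1 / Cmat) • gF) ⬝ᵥ gF = (1 / Cmat) * (gF ⬝ᵥ gF) := by
          rw [smul_dotProduct, smul_eq_mul]
        have h2 : ((1 / Cmat) • gF) ⬝ᵥ ΘF.mulVec ((1 / Cmat) • gF)
            = (1 / Cmat) ^ 2 * (gF ⬝ᵥ ΘF.mulVec gF) := by
          rw [Matrix.mulVec_smul, smul_dotProduct, dotProduct_smul,
            smul_eq_mul, smul_eq_mul]
          ring
        rw [h1, h2, hnegF] at hfb
        have hge := dot_self_nonneg' gF
        have habs : |(1 / Cmat) * (gF ⬝ᵥ gF)| = (1 / Cmat) * (gF ⬝ᵥ gF) :=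
          abs_of_nonneg (mul_nonneg (by positivity) hge)
        rw [habs] at hfb
        -- multiply through by Cmat
        have hm := mul_le_mul_of_nonneg_left hfb hCmatpos.le
        have hL : Cmat * ((1 / Cmat) * (gF ⬝ᵥ gF)) = gF ⬝ᵥ gF := by
          field_simp
        have hR : Cmat * (1 / 2 * ((1 / Cmat) ^ 2 * (gF ⬝ᵥ ΘF.mulVec gF)
            + (v - K.mulVec xstar) ⬝ᵥ ΘF.mulVec (v - K.mulVec xstar)))
            = (gF ⬝ᵥ ΘF.mulVec gF) / (2 * Cmat)
              + Cmat * ((v - K.mulVec xstar) ⬝ᵥ ΘF.mulVec (v - K.mulVec xstar)) / 2 := by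
          field_simp
        rw [hL, hR] at hm
        have hq : gF ⬝ᵥ ΘF.mulVec gF ≤ Cmat * (gF ⬝ᵥ gF) := by
          have h4 := quad_le_opNorm ΘF gF
          have h5 := mul_le_mul_of_nonneg_right hCmatΘF hge
          linarith only [h4, h5]
        have hq2 : (gF ⬝ᵥ ΘF.mulVec gF) / (2 * Cmat) ≤ (gF ⬝ᵥ gF) / 2 := by
          rw [div_le_div_iff₀ (by linarith only [hCmatpos]) (by norm_num)]
          nlinarith only [hq]
        have hQd2C : (v - K.mulVec xstar) ⬝ᵥ ΘF.mulVec (v - K.mulVec xstar)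
            ≤ Cmat * ((v - K.mulVec xstar) ⬝ᵥ (v - K.mulVec xstar)) := by
          have h1 := quad_le_opNorm ΘF (v - K.mulVec xstar)
          have h2 := mul_le_mul_of_nonneg_right hCmatΘF hE2
          linarith only [h1, h2]
        have hD2 : Cmat * ((v - K.mulVec xstar) ⬝ᵥ ΘF.mulVec (v - K.mulVec xstar)) / 2
            ≤ Cmat ^ 2 * ((v - K.mulVec xstar) ⬝ᵥ (v - K.mulVec xstar)) / 2 := by
          nlinarith only [mul_le_mul_of_nonneg_left hQd2C hCmatpos.le]
        linarith only [hm, hq2, hD2]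
      have he2gF : e2 gF ≤ Cmat * e2 (v - K.mulVec xstar) := by
        rw [e2, e2]
        calc Real.sqrt (gF ⬝ᵥ gF)
            ≤ Real.sqrt (Cmat ^ 2 * ((v - K.mulVec xstar) ⬝ᵥ (v - K.mulVec xstar))) :=
              Real.sqrt_le_sqrt hgFE
          _ = Cmat * Real.sqrt ((v - K.mulVec xstar) ⬝ᵥ (v - K.mulVec xstar)) := by
              rw [Real.sqrt_mul (by positivity) _, Real.sqrt_sq hCmatpos.le]
      have hEd2le : (v - K.mulVec xstar) ⬝ᵥ (v - K.mulVec xstar) ≤ QQ / cc := by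
        rw [le_div_iff₀ hccpos, hQQ]
        nlinarith only [mul_nonneg hccpos.le hE1, hpsdF2, hpsdG1]
      have he2d2 : e2 (v - K.mulVec xstar) ≤ Real.sqrt QQ / Real.sqrt cc := by
        rw [e2]
        calc Real.sqrt ((v - K.mulVec xstar) ⬝ᵥ (v - K.mulVec xstar))
            ≤ Real.sqrt (QQ / cc) := Real.sqrt_le_sqrt hEd2le
          _ = Real.sqrt QQ / Real.sqrt cc := Real.sqrt_div hQQ0 cc
      have hExle : Δx ⬝ᵥ Δx ≤ (QQ + 24 * (τ * R) ^ 2) / (2 * Ccvx) := by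
        rw [le_div_iff₀ (by linarith only [hCcvx]), hQQ]
        nlinarith only [hKEY, hpsdFv, hpsdGx, mul_nonneg hccpos.le (add_nonneg hE1 hE2)]
      have he2Δx : e2 Δx ≤ (Real.sqrt QQ + 5 * (τ * R)) / Real.sqrt (2 * Ccvx) := by
        rw [e2]
        have h1 : Real.sqrt (Δx ⬝ᵥ Δx) ≤ Real.sqrt ((QQ + 24 * (τ * R) ^ 2) / (2 * Ccvx)) :=
          Real.sqrt_le_sqrt hExle
        have h2 : Real.sqrt ((QQ + 24 * (τ * R) ^ 2) / (2 * Ccvx))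
            = Real.sqrt (QQ + 24 * (τ * R) ^ 2) / Real.sqrt (2 * Ccvx) :=
          Real.sqrt_div (by positivity) _
        have h3 : Real.sqrt (QQ + 24 * (τ * R) ^ 2) ≤ Real.sqrt QQ + 5 * (τ * R) := by
          have h := sqrt_add_le' QQ (24 * (τ * R) ^ 2) hQQ0 (by positivity)
          linarith only [h, hsqrt24]
        have h4 : Real.sqrt (QQ + 24 * (τ * R) ^ 2) / Real.sqrt (2 * Ccvx)
            ≤ (Real.sqrt QQ + 5 * (τ * R)) / Real.sqrt (2 * Ccvx) := by
          gcongr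
        linarith only [h1, h2, h4]
      have hsum2 : e2 (Sum.elim Δx (wzv - wstar)) ≤ e2 Δx + e2 (wzv - wstar) := by
        rw [e2, sumElim_dotProduct_sumElim]
        exact sqrt_add_le' _ _ (dot_self_nonneg' _) (dot_self_nonneg' _)
      have hw1 : e2 (wzv - wstar) ≤ e2 (wzv - (wstar - gF)) + e2 gF := by
        have heq : wzv - wstar = (wzv - (wstar - gF)) + (-gF) := by abel
        rw [heq]
        have h := e2_add_le (wzv - (wstar - gF)) (-gF)
        rwa [e2_neg] at h
      have hcg : Cgrad * e2 (K.mulVec Δx) ≤ |Cgrad| * (Cmat * e2 Δx) := by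
        calc Cgrad * e2 (K.mulVec Δx) ≤ |Cgrad| * e2 (K.mulVec Δx) :=
            mul_le_mul_of_nonneg_right (le_abs_self _) (e2_nonneg _)
          _ ≤ |Cgrad| * (Cmat * e2 Δx) := mul_le_mul_of_nonneg_left hKe2 (abs_nonneg _)
      rw [hQR]
      have htot : e2 (Sum.elim Δx (wzv - wstar))
          ≤ CLip + (1 + |Cgrad| * Cmat) * e2 Δx + Cmat * e2 (v - K.mulVec xstar) := by
        nlinarith only [hsum2, hw1, hc', hcg, he2gF]
      -- final numeric combination
      have hA0 : (0:ℝ) ≤ 1 + |Cgrad| * Cmat := by positivity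
      have hs2pos : (0:ℝ) < Real.sqrt (2 * Ccvx) := Real.sqrt_pos.2 (by linarith only [hCcvx])
      have hscpos : (0:ℝ) < Real.sqrt cc := Real.sqrt_pos.2 hccpos
      have hAx : (1 + |Cgrad| * Cmat) * e2 Δx
          ≤ ((1 + |Cgrad| * Cmat) / Real.sqrt (2 * Ccvx)) * Real.sqrt QQ
            + 5 * ((1 + |Cgrad| * Cmat) / Real.sqrt (2 * Ccvx)) * (τ * R) := by
        have h := mul_le_mul_of_nonneg_left he2Δx hA0
        calc (1 + |Cgrad| * Cmat) * e2 Δx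
            ≤ (1 + |Cgrad| * Cmat) * ((Real.sqrt QQ + 5 * (τ * R)) / Real.sqrt (2 * Ccvx)) := h
          _ = ((1 + |Cgrad| * Cmat) / Real.sqrt (2 * Ccvx)) * Real.sqrt QQ
            + 5 * ((1 + |Cgrad| * Cmat) / Real.sqrt (2 * Ccvx)) * (τ * R) := by ring
      have hBx : Cmat * e2 (v - K.mulVec xstar)
          ≤ (Cmat / Real.sqrt cc) * Real.sqrt QQ := by
        have h := mul_le_mul_of_nonneg_left he2d2 hCmatpos.le
        calc Cmat * e2 (v - K.mulVec xstar)
            ≤ Cmat * (Real.sqrt QQ / Real.sqrt cc) := h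
          _ = (Cmat / Real.sqrt cc) * Real.sqrt QQ := by ring
      have hCex' : Cex = 5 + 5 * ((1 + |Cgrad| * Cmat) / Real.sqrt (2 * Ccvx))
          + Cmat / Real.sqrt cc := by
        rw [hCex, hm1C]; ring
      have ha0 : (0:ℝ) ≤ (1 + |Cgrad| * Cmat) / Real.sqrt (2 * Ccvx) := by positivity
      have hb0 : (0:ℝ) ≤ Cmat / Real.sqrt cc := by positivity
      rw [hCex']
      nlinarith only [htot, hAx, hBx, hq0, hτR,
        mul_nonneg ha0 hq0, mul_nonneg hb0 hτR, mul_nonneg ha0 hτR, mul_nonneg hb0 hq0]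
  · -- degenerate case : empty index type
    have hempty : IsEmpty (Fin d ⊕ Fin m) := not_nonempty_iff.1 hne
    have hq1 : ∀ (x : Fin d ⊕ Fin m → ℝ) (A : Matrix (Fin d ⊕ Fin m) (Fin d ⊕ Fin m) ℝ),
        x ⬝ᵥ A.mulVec x = 0 := by
      intro x A; unfold dotProduct; simp
    have hCexnn : (0:ℝ) ≤ Cex := by linarith only [hCex5]
    constructor
    · rw [qnorm, qnorm, hq1, hq1, Real.sqrt_zero]
      have h0 : 0 ≤ Cex * (τ * R) := mul_nonneg hCexnn hτR
      simpa using h0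
    · have he : e2 (Sum.elim (xzv - xstar) (wzv - wstar)) = 0 := by
        rw [e2]
        have : (Sum.elim (xzv - xstar) (wzv - wstar)) ⬝ᵥ
            (Sum.elim (xzv - xstar) (wzv - wstar)) = 0 := by
          unfold dotProduct; simp
        rw [this, Real.sqrt_zero]
      rw [he, qnorm, hq1, Real.sqrt_zero]
      have h0 : 0 ≤ Cex * (0 + τ * R) := mul_nonneg hCexnn (by linarith only [hτR])
      linarith only [hCLip0, h0]

end
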